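/- Let D be an integral domain and F a localizing system of ideals of D (nontrivial: F nonempty and (0) ∉ F). Then for every nonzero D-submodule E of the quotient field K, the assignment E ↦ E_F := ⋃_{I ∈ F} (E : I) defines a stable semistar operation on D, where (E : I) := {x ∈ K : xI ⊆ E}. -/

import Mathlib

set_option linter.unusedSectionVars false

open Pointwise

variable {D K : Type*} [CommRing D] [IsDomain D] [Field K] [Algebra D K] [IsFractionRing D K]

/-- `(E : I) = {x ∈ K : xI ⊆ E}`, as a `D`-submodule of `K`. -/
def colonK (E : Submodule D K) (I : Ideal D) : Submodule D K where
  carrier := {x : K | ∀ a ∈ I, x * algebraMap D K a ∈ E}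
  zero_mem' := fun a _ => by simp
  add_mem' := by
    rintro x y hx hy a ha
    rw [add_mul]
    exact E.add_mem (hx a ha) (hy a ha)
  smul_mem' := by
    rintro d x hx a ha
    rw [smul_mul_assoc]
    exact E.smul_mem d (hx a ha)

/-- `E_F := ⋃_{I ∈ F} (E : I)`, as a `D`-submodule of `K` (the union is directed when
`F` is a localizing system, so it coincides with the supremum). -/
def EF (F : Set (Ideal D)) (E : Submodule D K) : Submodule D K :=
  ⨆ I ∈ F, colonK E I

lemma mem_colonK {E : Submodule D K} {I : Ideal D} {x : K} :
    x ∈ colonK E I ↔ ∀ a ∈ I, x * algebraMap D K a ∈ E := Iff.rfl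

lemma colonK_anti {E : Submodule D K} {I J : Ideal D} (h : I ≤ J) :
    colonK E J ≤ colonK E I := fun x hx a ha => hx a (h ha)

lemma colonK_mono {E E' : Submodule D K} {I : Ideal D} (h : E ≤ E') :
    colonK E I ≤ colonK E' I := fun x hx a ha => h (hx a ha)

section LS

variable (F : Set (Ideal D))
  (hup : ∀ I ∈ F, ∀ J : Ideal D, I ≤ J → J ∈ F)
  (htr : ∀ I ∈ F, ∀ J : Ideal D, (∀ i ∈ I, J.colon (Ideal.span {i}) ∈ F) → J ∈ F)

include hup htr in
lemma mul_mem_F {I J : Ideal D} (hI : I ∈ F) (hJ : J ∈ F) : I * J ∈ F := by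
  refine htr I hI (I * J) fun i hi => hup J hJ _ fun j hj => ?_
  rw [Ideal.mem_colon_span_singleton, mul_comm I J]
  exact Ideal.mul_mem_mul hj hi

include hup htr in
lemma inf_mem_F {I J : Ideal D} (hI : I ∈ F) (hJ : J ∈ F) : I ⊓ J ∈ F :=
  hup _ (mul_mem_F F hup htr hI hJ) _ Ideal.mul_le_inf

include hup htr in
lemma mem_EF (hne : F.Nonempty) {E : Submodule D K} {x : K} :
    x ∈ EF F E ↔ ∃ I ∈ F, x ∈ colonK E I := by
  have : Nonempty F := hne.to_subtype
  rw [EF, iSup_subtype', Submodule.mem_iSup_of_directed]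
  · simp [Subtype.exists]
  · rintro ⟨I, hI⟩ ⟨J, hJ⟩
    exact ⟨⟨I ⊓ J, inf_mem_F F hup htr hI hJ⟩,
      colonK_anti inf_le_left, colonK_anti inf_le_right⟩

end LS

/-- The ideal of denominators `{d : D | x * d ∈ E}`. -/
def colonD (E : Submodule D K) (x : K) : Ideal D where
  carrier := {d : D | x * algebraMap D K d ∈ E}
  zero_mem' := by simp
  add_mem' := fun {a b} ha hb => by
    simpa [map_add, mul_add] using E.add_mem ha hb
  smul_mem' := fun c a ha => by
    have := E.smul_mem c ha
    simpa [Algebra.smul_def, map_mul, mul_comm, mul_assoc, mul_left_comm] using this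

/-- for a (nontrivial) localizing system `F` of ideals of `D`, the assignment
`E ↦ E_F = ⋃_{I ∈ F}(E : I)` is a stable semistar operation on `D`. -/
theorem EF_stable_semistar (F : Set (Ideal D)) (hne : F.Nonempty) (h0 : ⊥ ∉ F)
    (hup : ∀ I ∈ F, ∀ J : Ideal D, I ≤ J → J ∈ F)
    (htr : ∀ I ∈ F, ∀ J : Ideal D, (∀ i ∈ I, J.colon (Ideal.span {i}) ∈ F) → J ∈ F) :
    (∀ E : Submodule D K, E ≠ ⊥ → (EF F E : Set K) = ⋃ I ∈ F, (colonK E I : Set K)) ∧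
    (∀ (x : K), x ≠ 0 → ∀ E : Submodule D K, E ≠ ⊥ → EF F (x • E) = x • EF F E) ∧
    (∀ E E' : Submodule D K, E ≠ ⊥ → E' ≠ ⊥ → E ≤ E' → EF F E ≤ EF F E') ∧
    (∀ E : Submodule D K, E ≠ ⊥ → E ≤ EF F E) ∧
    (∀ E : Submodule D K, E ≠ ⊥ → EF F (EF F E) = EF F E) ∧
    (∀ E E' : Submodule D K, E ≠ ⊥ → E' ≠ ⊥ → EF F (E ⊓ E') = EF F E ⊓ EF F E') := by
  have hmem : ∀ (E : Submodule D K) (x : K),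
      x ∈ EF F E ↔ ∃ I ∈ F, x ∈ colonK E I := fun E x => mem_EF F hup htr hne
  have hmono : ∀ E E' : Submodule D K, E ≤ E' → EF F E ≤ EF F E' := by
    intro E E' hEE' x hx
    obtain ⟨I, hI, hxI⟩ := (hmem E x).mp hx
    exact (hmem E' x).mpr ⟨I, hI, colonK_mono hEE' hxI⟩
  have hle : ∀ E : Submodule D K, E ≤ EF F E := by
    intro E e he
    obtain ⟨I, hI⟩ := hne
    refine (hmem E e).mpr ⟨I, hI, fun a _ => ?_⟩
    rw [mul_comm, ← Algebra.smul_def]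
    exact E.smul_mem a he
  refine ⟨?_, ?_, fun E E' _ _ h => hmono E E' h, fun E _ => hle E, ?_, ?_⟩
  · -- coe as union
    intro E _
    ext x
    simp only [SetLike.mem_coe, Set.mem_iUnion, hmem E x]
    tauto
  · -- smul
    intro x hx E _
    have key : ∀ y : K, ∀ I : Ideal D, y ∈ colonK (x • E) I ↔ x⁻¹ * y ∈ colonK E I := by
      intro y I
      constructor
      · intro hy a ha
        obtain ⟨e, he, hxe⟩ := Set.mem_smul_set.mp (hy a ha)
        have : e = x⁻¹ * (y * algebraMap D K a) := by
          rw [← hxe, smul_eq_mul, ← mul_assoc, inv_mul_cancel₀ hx, one_mul]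
        rw [mul_assoc, ← this]; exact he
      · intro hy a ha
        have := hy a ha
        refine Set.mem_smul_set.mpr ⟨x⁻¹ * y * algebraMap D K a, this, ?_⟩
        rw [smul_eq_mul, ← mul_assoc, ← mul_assoc, mul_inv_cancel₀ hx, one_mul]
    ext y
    rw [hmem]
    constructor
    · rintro ⟨I, hI, hyI⟩
      refine Set.mem_smul_set.mpr ⟨x⁻¹ * y, (hmem E _).mpr ⟨I, hI, (key y I).mp hyI⟩, ?_⟩
      rw [smul_eq_mul, ← mul_assoc, mul_inv_cancel₀ hx, one_mul]
    · intro hy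
      obtain ⟨z, hz, hxz⟩ := Set.mem_smul_set.mp hy
      obtain ⟨I, hI, hzI⟩ := (hmem E z).mp hz
      refine ⟨I, hI, (key y I).mpr ?_⟩
      have : x⁻¹ * y = z := by rw [← hxz, smul_eq_mul, ← mul_assoc, inv_mul_cancel₀ hx, one_mul]
      rwa [this]
  · -- idempotent
    intro E _
    refine le_antisymm ?_ (hle (EF F E))
    intro x hx
    obtain ⟨I, hI, hxI⟩ := (hmem (EF F E) x).mp hx
    refine (hmem E x).mpr ⟨colonD E x, ?_, fun a ha => ha⟩
    refine htr I hI _ fun i hi => ?_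
    obtain ⟨J, hJ, hJx⟩ := (hmem E (x * algebraMap D K i)).mp (hxI i hi)
    refine hup J hJ _ fun b hb => ?_
    rw [Ideal.mem_colon_span_singleton]
    show x * algebraMap D K (b * i) ∈ E
    rw [map_mul, mul_comm (algebraMap D K b), ← mul_assoc]
    exact hJx b hb
  · -- inf
    intro E E' _ _
    refine le_antisymm (le_inf (hmono _ _ inf_le_left) (hmono _ _ inf_le_right)) ?_
    rintro x ⟨hx1, hx2⟩
    obtain ⟨I, hI, hxI⟩ := (hmem E x).mp hx1
    obtain ⟨J, hJ, hxJ⟩ := (hmem E' x).mp hx2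
    refine (hmem (E ⊓ E') x).mpr ⟨I ⊓ J, inf_mem_F F hup htr hI hJ, fun a ha => ?_⟩
    exact ⟨hxI a ha.1, hxJ a ha.2⟩
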